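/- arXiv:1011.1462 — 4 statements merged into one kernel-verified Lean document; each statement's English description precedes it below -/
import Mathlib

section
/- Let E ⊆ ℝ^d be a Borel set translation congruent to Q = [0,1)^d, and let μ be Lebesgue measure restricted to E. Then the exponentials {e_n : n ∈ ℤ^d} form an orthonormal basis of L²(μ); that is, ℤ^d is a spectrum for μ. -/
set_option maxHeartbeats 1000000

open MeasureTheory Complex

/-- The exponential `e_λ(x) = exp(2πi λ·x)` on `ℝ^d`. -/
noncomputable def expFn {d : ℕ} (lam x : Fin d → ℝ) : ℂ :=
  Complex.exp (2 * Real.pi * Complex.I * (∑ i, lam i * x i))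

/-- The unit cube `Q = [0,1)^d`. -/
def unitCube (d : ℕ) : Set (Fin d → ℝ) := {x | ∀ i, x i ∈ Set.Ico (0 : ℝ) 1}

noncomputable section

namespace Stmt4Aux

open ContinuousMap Submodule Set Algebra

local instance fact01 : Fact ((0:ℝ) < 1) := ⟨one_pos⟩

abbrev Td (d : ℕ) := Fin d → AddCircle (1:ℝ)

instance : IsProbabilityMeasure (volume : Measure (AddCircle (1:ℝ))) :=
  ⟨by simp [AddCircle.measure_univ]⟩

variable {d : ℕ}

/-! ### Characters on the torus -/

def mchar (n : Fin d → ℤ) : C(Td d, ℂ) :=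
  ∏ i, (fourier (n i)).comp ⟨fun t => t i, continuous_apply i⟩

lemma mchar_apply (n : Fin d → ℤ) (t : Td d) :
    mchar n t = ∏ i, fourier (n i) (t i) := by simp [mchar]

lemma mchar_zero (t : Td d) : mchar 0 t = 1 := by
  simp [mchar_apply, fourier_zero]

lemma mchar_add (n m : Fin d → ℤ) (t : Td d) :
    mchar (n + m) t = mchar n t * mchar m t := by
  simp only [mchar_apply, Pi.add_apply, fourier_add]
  rw [Finset.prod_mul_distrib]

lemma mchar_neg (n : Fin d → ℤ) (t : Td d) :
    mchar (-n) t = (starRingEnd ℂ) (mchar n t) := by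
  simp only [mchar_apply, Pi.neg_apply, fourier_neg, map_prod]

lemma mchar_single (i : Fin d) (t : Td d) :
    mchar (Pi.single i 1) t = fourier 1 (t i) := by
  rw [mchar_apply, Finset.prod_eq_single i]
  · simp
  · intro j _ hj; simp [Pi.single_eq_of_ne hj, fourier_zero]
  · simp

/-- The star subalgebra generated by the multi-characters. -/
def mcharSubalgebra (d : ℕ) : StarSubalgebra ℂ C(Td d, ℂ) where
  toSubalgebra := Algebra.adjoin ℂ (range (mchar (d := d)))
  star_mem' := by
    show Algebra.adjoin ℂ (range (mchar (d := d))) ≤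
      star (Algebra.adjoin ℂ (range (mchar (d := d))))
    refine adjoin_le ?_
    rintro - ⟨n, rfl⟩
    refine subset_adjoin ⟨-n, ?_⟩
    ext t
    show mchar (-n) t = (starRingEnd ℂ) (mchar n t)
    exact mchar_neg n t

lemma mcharSubalgebra_coe :
    Subalgebra.toSubmodule (mcharSubalgebra d).toSubalgebra =
      span ℂ (range (mchar (d := d))) := by
  apply adjoin_eq_span_of_subset
  refine Subset.trans ?_ Submodule.subset_span
  intro x hx
  refine Submonoid.closure_induction (fun _ => id) ⟨0, ?_⟩ ?_ hx
  · ext1 t; exact mchar_zero t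
  · rintro - - - - ⟨m, rfl⟩ ⟨n, rfl⟩
    exact ⟨m + n, by ext1 t; exact mchar_add m n t⟩

lemma mcharSubalgebra_separatesPoints : (mcharSubalgebra d).SeparatesPoints := by
  intro x y hxy
  obtain ⟨i, hi⟩ := Function.ne_iff.mp hxy
  refine ⟨_, ⟨mchar (Pi.single i 1), subset_adjoin ⟨Pi.single i 1, rfl⟩, rfl⟩, ?_⟩
  dsimp only
  rw [mchar_single, mchar_single, fourier_one, fourier_one]
  intro h
  rw [Circle.coe_inj] at h
  exact hi (AddCircle.injective_toCircle one_ne_zero h)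

lemma mcharSubalgebra_closure_eq_top : (mcharSubalgebra d).topologicalClosure = ⊤ :=
  ContinuousMap.starSubalgebra_topologicalClosure_eq_top_of_separatesPoints _
    mcharSubalgebra_separatesPoints

lemma span_mchar_closure_eq_top :
    (span ℂ (range (mchar (d := d)))).topologicalClosure = ⊤ := by
  rw [← mcharSubalgebra_coe]
  exact congr_arg (Subalgebra.toSubmodule <| StarSubalgebra.toSubalgebra ·)
    mcharSubalgebra_closure_eq_top

lemma span_mcharLp_closure_eq_top :
    (span ℂ (range (fun n : Fin d → ℤ => toLp (E := ℂ) 2 volume ℂ (mchar n)))).topologicalClosure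
      = ⊤ := by
  convert
    (ContinuousMap.toLp_denseRange ℂ (volume : Measure (Td d)) ℂ
      (by norm_num : (2 : ENNReal) ≠ ⊤)).topologicalClosure_map_submodule
      span_mchar_closure_eq_top
  case e'_3 => rfl
  erw [map_span, range_comp]
  simp only [ContinuousLinearMap.coe_coe]

/-- Integral of a character on the torus. -/
lemma integral_mchar (n : Fin d → ℤ) :
    ∫ t : Td d, mchar n t = if n = 0 then 1 else 0 := by
  split_ifs with h
  · subst h
    have : ∀ t : Td d, mchar 0 t = 1 := fun t => by simp [mchar_apply, fourier_zero]
    simp only [this]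
    simp
  · obtain ⟨i, hi⟩ : ∃ i, n i ≠ 0 := by
      by_contra hc; push_neg at hc; exact h (funext hc)
    have key : ∀ t : Td d,
        mchar n (t + Pi.single i ((↑((1:ℝ) / 2 / (n i)) : AddCircle (1:ℝ)))) = -mchar n t := by
      intro t
      simp only [mchar_apply, Pi.add_apply]
      rw [← Finset.mul_prod_erase Finset.univ _ (Finset.mem_univ i),
        ← Finset.mul_prod_erase Finset.univ (fun j => fourier (n j) (t j)) (Finset.mem_univ i)]
      rw [Pi.single_eq_same, fourier_add_half_inv_index hi one_pos, neg_mul]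
      congr 1
      congr 1
      refine Finset.prod_congr rfl fun j hj => ?_
      rw [Pi.single_eq_of_ne (Finset.mem_erase.mp hj).1, add_zero]
    exact integral_eq_zero_of_add_right_eq_neg key

/-- Completeness of the characters on the torus. -/
lemma torus_complete (g : Td d → ℂ) (hg : MemLp g 2 (volume : Measure (Td d)))
    (h : ∀ n : Fin d → ℤ, ∫ t, g t * (starRingEnd ℂ) (mchar n t) = 0) :
    g =ᵐ[(volume : Measure (Td d))] 0 := by
  set G : Lp ℂ 2 (volume : Measure (Td d)) := hg.toLp g with hG
  have hinner : ∀ n : Fin d → ℤ,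
      (inner ℂ (toLp (E := ℂ) 2 volume ℂ (mchar n)) G : ℂ) = 0 := by
    intro n
    have h1 : (inner ℂ (toLp (E := ℂ) 2 volume ℂ (mchar n)) G : ℂ) =
        ∫ t, (starRingEnd ℂ) (mchar n t) * g t := by
      rw [MeasureTheory.L2.inner_def]
      apply integral_congr_ae
      filter_upwards [ContinuousMap.coeFn_toLp (p := 2) (𝕜 := ℂ) volume (mchar n),
        hg.coeFn_toLp] with t h1 h2
      rw [h1, h2]
      simp [RCLike.inner_apply]
      ring
    rw [h1, ← h n]
    congr 1; ext t; ring
  have hGmem : G ∈ (span ℂ (range (fun n : Fin d → ℤ => toLp (E := ℂ) 2 volume ℂ (mchar n))))ᗮ := by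
    rw [Submodule.mem_orthogonal]
    intro u hu
    induction hu using Submodule.span_induction with
    | mem x hx => obtain ⟨n, rfl⟩ := hx; exact hinner n
    | zero => simp
    | add x y _ _ hx hy => rw [inner_add_left, hx, hy, add_zero]
    | smul c x _ hx => rw [inner_smul_left, hx, mul_zero]
  set K := span ℂ (range (fun n : Fin d → ℤ => toLp (E := ℂ) 2 volume ℂ (mchar n))) with hK
  have htop : K.topologicalClosure = ⊤ := span_mcharLp_closure_eq_top
  have h1 : Kᗮᗮ = ⊤ := by rw [Submodule.orthogonal_orthogonal_eq_closure]; exact htop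
  have h2 : Kᗮ ≤ ⊥ := by
    have := Submodule.le_orthogonal_orthogonal Kᗮ
    rwa [show Kᗮᗮᗮ = ⊥ by rw [h1, Submodule.top_orthogonal_eq_bot]] at this
  have hG0 : G = 0 := by simpa using h2 hGmem
  have : g =ᵐ[(volume : Measure (Td d))] G := hg.coeFn_toLp.symm
  refine this.trans ?_
  rw [hG0]
  exact Lp.coeFn_zero ℂ 2 _

/-! ### The covering map `φ : ℝ^d → 𝕋^d` -/

def kvec (k : Fin d → ℤ) : Fin d → ℝ := fun i => (k i : ℝ)

def phi (d : ℕ) : (Fin d → ℝ) → Td d := fun x i => (x i : AddCircle (1:ℝ))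

lemma continuous_phi : Continuous (phi d) :=
  continuous_pi fun i => (AddCircle.continuous_mk' 1).comp (continuous_apply i)

lemma measurable_phi : Measurable (phi d) := continuous_phi.measurable

lemma coe_int_addCircle (m : ℤ) : ((m : ℝ) : AddCircle (1:ℝ)) = 0 := by
  rw [AddCircle.coe_eq_zero_iff]
  exact ⟨m, by simp⟩

lemma phi_add_kvec (x : Fin d → ℝ) (k : Fin d → ℤ) : phi d (x + kvec k) = phi d x := by
  funext i
  show ((x i + (k i : ℝ) : ℝ) : AddCircle (1:ℝ)) = ((x i : ℝ) : AddCircle (1:ℝ))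
  have : ((x i + (k i : ℝ) : ℝ) : AddCircle (1:ℝ)) =
      ((x i : ℝ) : AddCircle (1:ℝ)) + (((k i : ℝ) : ℝ) : AddCircle (1:ℝ)) := rfl
  rw [this, coe_int_addCircle, add_zero]

lemma expFn_eq_mchar (n : Fin d → ℤ) (x : Fin d → ℝ) :
    expFn (fun i => (n i : ℝ)) x = mchar n (phi d x) := by
  rw [mchar_apply]
  simp only [phi, fourier_coe_apply]
  rw [← Complex.exp_sum, expFn]
  congr 1
  push_cast
  rw [Finset.mul_sum]
  refine Finset.sum_congr rfl fun i _ => ?_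
  ring

/-! ### Pushforward of the restricted measure -/

lemma unitCube_eq : unitCube d = Set.pi Set.univ (fun _ : Fin d => Ico (0:ℝ) 1) := by
  ext x; simp [unitCube, Set.mem_pi]

lemma measurableSet_unitCube : MeasurableSet (unitCube d) := by
  rw [unitCube_eq]; exact MeasurableSet.univ_pi fun _ => measurableSet_Ico

lemma restrict_unitCube_pi :
    (volume : Measure (Fin d → ℝ)).restrict (unitCube d) =
      Measure.pi (fun _ : Fin d => volume.restrict (Ico (0:ℝ) 1)) := by
  refine (Measure.pi_eq (μ := fun _ : Fin d => volume.restrict (Ico (0:ℝ) 1)) fun s hs => ?_).symm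
  rw [Measure.restrict_apply (MeasurableSet.univ_pi hs), unitCube_eq, ← Set.pi_inter_distrib,
    volume_pi_pi]
  exact Finset.prod_congr rfl fun i _ => (Measure.restrict_apply (hs i)).symm

lemma map_phi_restrict_unitCube :
    Measure.map (phi d) ((volume : Measure (Fin d → ℝ)).restrict (unitCube d)) =
      (volume : Measure (Td d)) := by
  have hv : (volume : Measure (Td d)) = Measure.pi (fun _ => volume) := volume_pi
  rw [hv]
  refine (Measure.pi_eq (μ := fun _ : Fin d => (volume : Measure (AddCircle (1:ℝ)))) fun s hs => ?_).symm
  rw [Measure.map_apply measurable_phi (MeasurableSet.univ_pi hs)]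
  have hpre : phi d ⁻¹' (Set.pi Set.univ s) =
      Set.pi Set.univ (fun i => (fun r : ℝ => (r : AddCircle (1:ℝ))) ⁻¹' (s i)) := by
    ext x; simp [phi, Set.mem_pi]
  rw [hpre, restrict_unitCube_pi,
    show (fun _ : Fin d => volume.restrict (Ico (0:ℝ) 1)) =
      fun _ : Fin d => volume.restrict (Ioc (0:ℝ) 1) from
      funext fun _ => Measure.restrict_congr_set Ico_ae_eq_Ioc,
    Measure.pi_pi]
  refine Finset.prod_congr rfl fun i _ => ?_
  have hmp := AddCircle.measurePreserving_mk 1 0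
  rw [zero_add] at hmp
  exact hmp.measure_preimage (hs i).nullMeasurableSet


/-! ### Translated pieces -/

lemma translate_measurableSet {A : Set (Fin d → ℝ)} (hA : MeasurableSet A) (k : Fin d → ℤ) :
    MeasurableSet ((fun x => x + kvec k) '' A) := by
  rw [Set.image_add_right]
  exact hA.preimage (measurable_add_const _)

lemma volume_translate (A : Set (Fin d → ℝ)) (k : Fin d → ℤ) :
    volume ((fun x => x + kvec k) '' A) = volume A := by
  rw [Set.image_add_right, measure_preimage_add_right]

lemma pairwise_disjoint_translates {Ek : (Fin d → ℤ) → Set (Fin d → ℝ)}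
    (hsub : ∀ k, Ek k ⊆ unitCube d) :
    Pairwise (Function.onFun Disjoint (fun k => (fun x => x + kvec k) '' Ek k)) := by
  intro k j hkj
  rw [Function.onFun, Set.disjoint_left]
  rintro x ⟨a, ha, rfl⟩ ⟨b, hb, hba⟩
  apply hkj
  funext i
  have ha' := (hsub k ha) i
  have hb' := (hsub j hb) i
  have hcoord : b i + (j i : ℝ) = a i + (k i : ℝ) := congrFun hba i
  have hcast : ((k i - j i : ℤ) : ℝ) = b i - a i := by push_cast; linarith
  have habs : |((k i - j i : ℤ) : ℝ)| < 1 := by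
    rw [hcast, abs_lt]
    constructor <;> [linarith [ha'.2, hb'.1]; linarith [ha'.1, hb'.2]]
  have : |k i - j i| < 1 := by exact_mod_cast habs
  rw [abs_lt] at this
  omega

/-! ### Pushforward of μ -/

lemma map_phi_mu {E : Set (Fin d → ℝ)} {Ek : (Fin d → ℤ) → Set (Fin d → ℝ)}
    (hEkmeas : ∀ k, MeasurableSet (Ek k))
    (hdisj : Pairwise (Function.onFun Disjoint Ek))
    (hcover : (⋃ k, Ek k) = unitCube d)
    (hEdecomp : E = ⋃ k : Fin d → ℤ, (fun x => x + fun i => (k i : ℝ)) '' Ek k) :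
    Measure.map (phi d) (volume.restrict E) = (volume : Measure (Td d)) := by
  have hsub : ∀ k, Ek k ⊆ unitCube d := fun k => hcover ▸ Set.subset_iUnion Ek k
  have hEdecomp' : E = ⋃ k : Fin d → ℤ, (fun x => x + kvec k) '' Ek k := hEdecomp
  ext s hs
  rw [Measure.map_apply measurable_phi hs, ← map_phi_restrict_unitCube,
    Measure.map_apply measurable_phi hs]
  set P := phi d ⁻¹' s with hPdef
  have hP : MeasurableSet P := measurable_phi hs
  have hPper : ∀ k, (fun x => x + kvec k) ⁻¹' P = P := by
    intro k
    ext x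
    simp only [Set.mem_preimage, hPdef]
    rw [phi_add_kvec]
  rw [Measure.restrict_apply hP, Measure.restrict_apply hP, hEdecomp']
  rw [Set.inter_iUnion,
    measure_iUnion
      (fun k j hkj => ((pairwise_disjoint_translates hsub) hkj).mono
        Set.inter_subset_right Set.inter_subset_right)
      (fun k => hP.inter (translate_measurableSet (hEkmeas k) k))]
  have hterm : ∀ k, volume (P ∩ (fun x => x + kvec k) '' Ek k) = volume (P ∩ Ek k) := by
    intro k
    have h1 : P ∩ (fun x => x + kvec k) '' Ek k = (fun x => x + kvec k) '' (Ek k ∩ P) := by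
      rw [Set.inter_comm]
      conv_rhs => rw [← hPper k]
      exact (Set.image_inter_preimage _ _ _).symm
    rw [h1, volume_translate, Set.inter_comm]
  rw [tsum_congr hterm,
    ← measure_iUnion
      (fun k j hkj => (hdisj hkj).mono Set.inter_subset_right Set.inter_subset_right)
      (fun k => hP.inter (hEkmeas k)),
    ← Set.inter_iUnion, hcover]


/-! ### Choosing representatives -/

def psi (d : ℕ) : Td d → (Fin d → ℝ) :=
  fun t i => ((AddCircle.measurableEquivIco (T := 1) 0 (t i) : Ico (0:ℝ) (0 + 1)) : ℝ)

lemma measurable_psi : Measurable (psi d) :=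
  measurable_pi_lambda _ fun i =>
    measurable_subtype_coe.comp
      ((AddCircle.measurableEquivIco (T := 1) 0).measurable.comp (measurable_pi_apply i))

lemma psi_phi {y : Fin d → ℝ} (hy : y ∈ unitCube d) : psi d (phi d y) = y := by
  funext i
  show ((AddCircle.equivIco 1 0 ((y i : ℝ) : AddCircle (1:ℝ)) : Ico (0:ℝ) (0 + 1)) : ℝ) = y i
  rw [AddCircle.coe_equivIco_mk_apply, div_one, mul_one, Int.fract_eq_self]
  exact ⟨(hy i).1, (hy i).2⟩

end Stmt4Aux

end

open Stmt4Aux Set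

/-- if `E` is translation congruent to `Q = [0,1)^d` and `μ` is Lebesgue measure
restricted to `E`, then `{e_n : n ∈ ℤ^d}` is an orthonormal basis of `L²(μ)` (orthonormality
together with completeness), i.e. `ℤ^d` is a spectrum for `μ`. -/
theorem stmt4 (d : ℕ) (E : Set (Fin d → ℝ)) (hE : MeasurableSet E)
    (Ek : (Fin d → ℤ) → Set (Fin d → ℝ))
    (hEkmeas : ∀ k, MeasurableSet (Ek k))
    (hdisj : Pairwise (Function.onFun Disjoint Ek))
    (hcover : (⋃ k, Ek k) = unitCube d)
    (hEdecomp : E = ⋃ k : Fin d → ℤ, (fun x => x + fun i => (k i : ℝ)) '' Ek k)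
    (μ : Measure (Fin d → ℝ)) (hμ : μ = volume.restrict E) :
    (∀ n m : Fin d → ℤ,
      ∫ x, expFn (fun i => (n i : ℝ)) x * (starRingEnd ℂ) (expFn (fun i => (m i : ℝ)) x) ∂μ
        = if n = m then 1 else 0) ∧
    (∀ f : (Fin d → ℝ) → ℂ, MemLp f 2 μ →
      (∀ n : Fin d → ℤ,
        ∫ x, f x * (starRingEnd ℂ) (expFn (fun i => (n i : ℝ)) x) ∂μ = 0) →
      f =ᵐ[μ] 0) := by
  subst hμ
  haveI : Fact ((0:ℝ) < 1) := ⟨one_pos⟩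
  have hmap : Measure.map (phi d) (volume.restrict E) = (volume : Measure (Td d)) :=
    map_phi_mu hEkmeas hdisj hcover hEdecomp
  constructor
  · intro n m
    have hint : ∀ x, expFn (fun i => (n i : ℝ)) x * (starRingEnd ℂ) (expFn (fun i => (m i : ℝ)) x)
        = mchar (n - m) (phi d x) := by
      intro x
      rw [expFn_eq_mchar, expFn_eq_mchar, ← mchar_neg, ← mchar_add, sub_eq_add_neg]
    simp only [hint]
    rw [show (∫ x, mchar (n - m) (phi d x) ∂(volume.restrict E))
        = ∫ t, mchar (n - m) t ∂(Measure.map (phi d) (volume.restrict E)) from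
      (MeasureTheory.integral_map measurable_phi.aemeasurable
        (by rw [hmap]; exact (mchar (n - m)).continuous.aestronglyMeasurable)).symm]
    rw [hmap, integral_mchar]
    simp [sub_eq_zero]
  · intro f hf hcoef
    set fm := hf.1.mk f with hfm_def
    have hfm : StronglyMeasurable fm := hf.1.stronglyMeasurable_mk
    have hfe : f =ᵐ[volume.restrict E] fm := hf.1.ae_eq_mk
    set F : (Fin d → ℝ) → ℂ :=
      fun y => ∑' k : Fin d → ℤ, (Ek k).indicator (fun z => fm (z + kvec k)) y with hFdef
    have hterm_meas : ∀ k, StronglyMeasurable ((Ek k).indicator (fun z => fm (z + kvec k))) :=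
      fun k => (hfm.comp_measurable (measurable_add_const _)).indicator (hEkmeas k)
    have hsum : ∀ y, HasSum (fun k => (Ek k).indicator (fun z => fm (z + kvec k)) y) (F y) := by
      intro y
      by_cases hy : ∃ k, y ∈ Ek k
      · obtain ⟨k0, hk0⟩ := hy
        have hz : ∀ j, j ≠ k0 → (Ek j).indicator (fun z => fm (z + kvec j)) y = 0 := by
          intro j hj
          exact Set.indicator_of_notMem
            (fun hyj => Set.disjoint_left.mp (hdisj hj) hyj hk0) _
        have hfun : (fun k => (Ek k).indicator (fun z => fm (z + kvec k)) y)
            = (fun k => if k = k0 then (Ek k0).indicator (fun z => fm (z + kvec k0)) y else 0) := by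
          funext j
          by_cases h : j = k0
          · subst h; rw [if_pos rfl]
          · rw [if_neg h, hz j h]
        have hsummable : Summable (fun k => (Ek k).indicator (fun z => fm (z + kvec k)) y) := by
          rw [hfun]
          exact (hasSum_ite_eq k0 _).summable
        exact hsummable.hasSum
      · push_neg at hy
        have h0 : ∀ k, (Ek k).indicator (fun z => fm (z + kvec k)) y = 0 :=
          fun k => Set.indicator_of_notMem (hy k) _
        have hF0 : F y = 0 := by
          simp only [hFdef]
          exact (tsum_congr h0).trans tsum_zero
        rw [hF0]
        simp only [h0]
        exact hasSum_zero
    have hFmeas : StronglyMeasurable F := by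
      refine stronglyMeasurable_of_tendsto (Filter.atTop : Filter (Finset (Fin d → ℤ)))
        (fun s => Finset.stronglyMeasurable_sum s fun k _ => hterm_meas k) ?_
      rw [tendsto_pi_nhds]
      exact fun y => by simp only [Finset.sum_apply]; exact hsum y
    set g : Td d → ℂ := F ∘ psi d with hgdef
    have hgm : StronglyMeasurable g := hFmeas.comp_measurable measurable_psi
    have hgphi : ∀ x ∈ E, g (phi d x) = fm x := by
      intro x hx
      rw [hEdecomp] at hx
      obtain ⟨k, hk⟩ := Set.mem_iUnion.mp hx
      obtain ⟨z, hz, rfl⟩ := hk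
      have hzq : z ∈ unitCube d := (hcover ▸ Set.subset_iUnion Ek k) hz
      show F (psi d (phi d (z + kvec k))) = fm (z + kvec k)
      rw [phi_add_kvec, psi_phi hzq]
      simp only [hFdef]
      refine (tsum_eq_single k ?_).trans (Set.indicator_of_mem hz _)
      intro j hj
      exact Set.indicator_of_notMem
        (fun hzj => Set.disjoint_left.mp (hdisj hj) hzj hz) _
    have hae : ∀ᵐ x ∂(volume.restrict E), x ∈ E := ae_restrict_mem hE
    have hgphi_ae : (fun x => g (phi d x)) =ᵐ[volume.restrict E] fm :=
      hae.mono fun x hx => hgphi x hx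
    have hfm2 : MemLp fm 2 (volume.restrict E) := hf.ae_eq hfe
    have hgφ2 : MemLp (fun x => g (phi d x)) 2 (volume.restrict E) := hfm2.ae_eq hgphi_ae.symm
    have hg2 : MemLp g 2 (volume : Measure (Td d)) := by
      rw [← hmap]
      exact (memLp_map_measure_iff hgm.aestronglyMeasurable
        measurable_phi.aemeasurable).mpr hgφ2
    have hcoefg : ∀ n : Fin d → ℤ, ∫ t, g t * (starRingEnd ℂ) (mchar n t) = 0 := by
      intro n
      have hm : AEStronglyMeasurable (fun t : Td d => g t * (starRingEnd ℂ) (mchar n t))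
          (volume : Measure (Td d)) :=
        hgm.aestronglyMeasurable.mul
          (continuous_star.comp (mchar n).continuous).aestronglyMeasurable
      rw [← hmap, MeasureTheory.integral_map measurable_phi.aemeasurable
        (by rw [hmap]; exact hm)]
      have heq : ∫ x, g (phi d x) * (starRingEnd ℂ) (mchar n (phi d x)) ∂(volume.restrict E)
          = ∫ x, f x * (starRingEnd ℂ) (expFn (fun i => (n i : ℝ)) x) ∂(volume.restrict E) := by
        apply integral_congr_ae
        filter_upwards [hgphi_ae, hfe] with x h1 h2
        simp only [h1, h2, expFn_eq_mchar]
      rw [heq]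
      exact hcoef n
    have hg0 : g =ᵐ[(volume : Measure (Td d))] 0 := torus_complete g hg2 hcoefg
    have h0 : g =ᵐ[Measure.map (phi d) (volume.restrict E)] 0 := hmap.symm ▸ hg0
    have hgφ0 := ae_eq_comp (μ := volume.restrict E) measurable_phi.aemeasurable h0
    exact hfe.trans (hgphi_ae.symm.trans hgφ0)
end

section
/- Let t ∈ ℝ^d have the property that e^{2πi k·t} = e^{2πi k₀·t} implies k = k₀ for k, k₀ ∈ ℤ^d (e.g., t with rationally independent irrational coordinates together with 1). If φ ≥ 0 satisfies ∑_k φ(x+k) = 1 and |∑_k e^{2πi k·t} φ(x+k)| = 1 for a.e. x (for a suitable family of such t), then for a.e. x there is a unique k₀ ∈ ℤ^d with φ(x+k₀) ≠ 0, and φ(x+k₀) = 1; i.e., φ is a.e. the indicator function of a set translation congruent to [0,1)^d. -/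
open MeasureTheory Complex

lemma hyp_null (d : ℕ) (m : Fin d → ℤ) (hm : m ≠ 0) (c : ℝ) :
    volume {t : Fin d → ℝ | ∑ i, (m i : ℝ) * t i = c} = 0 := by
  obtain ⟨i₀, hi₀⟩ : ∃ i, m i ≠ 0 := by
    by_contra h; push_neg at h; exact hm (funext h)
  set F : (Fin d → ℝ) →ₗ[ℝ] ℝ := ∑ i, (m i : ℝ) • LinearMap.proj i with hFdef
  have hF : ∀ t, F t = ∑ i, (m i : ℝ) * t i := by
    intro t
    simp [hFdef, LinearMap.sum_apply, smul_eq_mul]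
  have hmi : (m i₀ : ℝ) ≠ 0 := Int.cast_ne_zero.mpr hi₀
  set t₀ : Fin d → ℝ := Pi.single i₀ (c / (m i₀)) with ht₀def
  have ht₀ : F t₀ = c := by
    rw [hF]
    rw [Finset.sum_eq_single i₀]
    · simp [ht₀def, mul_div_cancel₀ _ hmi]
    · intro j _ hj; simp [ht₀def, Pi.single_eq_of_ne hj]
    · simp
  have hset : {t : Fin d → ℝ | ∑ i, (m i : ℝ) * t i = c}
      = (fun t => t + (-t₀)) ⁻¹' (LinearMap.ker F : Set (Fin d → ℝ)) := by
    ext t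
    simp only [Set.mem_setOf_eq, Set.mem_preimage, SetLike.mem_coe, LinearMap.mem_ker,
      map_add, map_neg, ht₀, ← hF t]
    constructor
    · intro h; rw [h]; ring
    · intro h; linarith
  rw [hset, measure_preimage_add_right]
  apply Measure.addHaar_submodule
  intro htop
  rw [LinearMap.ker_eq_top] at htop
  apply hmi
  have h1 : F (Pi.single i₀ (1:ℝ)) = (m i₀ : ℝ) := by
    rw [hF, Finset.sum_eq_single i₀]
    · simp
    · intro j _ hj; simp [Pi.single_eq_of_ne hj]
    · simp
  rw [htop] at h1; simpa using h1.symm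

lemma exists_sep (d : ℕ) : ∃ t : Fin d → ℝ, ∀ k k₀ : Fin d → ℤ,
    Complex.exp (2 * Real.pi * Complex.I * (∑ i, (k i : ℝ) * t i)) =
      Complex.exp (2 * Real.pi * Complex.I * (∑ i, (k₀ i : ℝ) * t i)) → k = k₀ := by
  set B : Set (Fin d → ℝ) :=
    ⋃ m ∈ {m : Fin d → ℤ | m ≠ 0}, ⋃ n : ℤ, {t : Fin d → ℝ | ∑ i, (m i : ℝ) * t i = n} with hB
  have hBnull : volume B = 0 := by
    refine (measure_biUnion_null_iff (Set.to_countable _)).mpr fun m hm => ?_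
    exact measure_iUnion_null fun n => hyp_null d m hm n
  have : B ≠ Set.univ := by
    intro h
    have h2 : volume (Set.univ : Set (Fin d → ℝ)) = 0 := h ▸ hBnull
    simp [MeasureTheory.volume_pi, Measure.pi_univ] at h2
  obtain ⟨t, htB⟩ : ∃ t, t ∉ B := by
    by_contra h; push_neg at h; exact this (Set.eq_univ_of_forall h)
  refine ⟨t, fun k k₀ hexp => ?_⟩
  by_contra hne
  rw [Complex.exp_eq_exp_iff_exists_int] at hexp
  obtain ⟨n, hn⟩ := hexp
  have h2 : (2 * Real.pi * Complex.I : ℂ) ≠ 0 := by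
    simp [Complex.ext_iff, Real.pi_ne_zero]
  have key : (((∑ i, (k i : ℝ) * t i : ℝ)) : ℂ) = ((∑ i, (k₀ i : ℝ) * t i : ℝ) : ℂ) + n := by
    have := hn
    rw [show ((n : ℂ)) * (2 * Real.pi * Complex.I) = (2 * Real.pi * Complex.I) * n by ring,
      ← mul_add] at this
    exact mul_left_cancel₀ h2 this
  have keyR : (∑ i, (k i : ℝ) * t i) = (∑ i, (k₀ i : ℝ) * t i) + n := by exact_mod_cast key
  apply htB
  rw [hB]
  refine Set.mem_biUnion (show k - k₀ ∈ {m : Fin d → ℤ | m ≠ 0} from sub_ne_zero.mpr hne) ?_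
  refine Set.mem_iUnion.mpr ⟨n, ?_⟩
  simp only [Set.mem_setOf_eq, Pi.sub_apply, Int.cast_sub]
  have : ∀ x, ((k x : ℝ) - (k₀ x : ℝ)) * t x = (k x : ℝ) * t x - (k₀ x : ℝ) * t x :=
    fun x => by ring
  simp only [this, Finset.sum_sub_distrib]
  linarith

lemma key_tri {ι : Type*} [Countable ι] (a : ι → ℝ) (c : ι → ℂ) (hc : ∀ i, ‖c i‖ = 1)
    (hcinj : Function.Injective c) (ha0 : ∀ i, 0 ≤ a i) (hsum : ∑' i, a i = 1)
    (hmod : ‖∑' i, c i * (a i : ℂ)‖ = 1) :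
    ∃ i₀, a i₀ = 1 ∧ ∀ i ≠ i₀, a i = 0 := by
  have ha : Summable a := by
    by_contra h; rw [tsum_eq_zero_of_not_summable h] at hsum; norm_num at hsum
  have hca : Summable (fun i => c i * (a i : ℂ)) := by
    apply Summable.of_norm
    refine ha.congr fun i => ?_
    rw [norm_mul, hc, one_mul, Complex.norm_real, Real.norm_eq_abs, _root_.abs_of_nonneg (ha0 i)]
  set S := ∑' i, c i * (a i : ℂ) with hSdef
  have hSnorm : ‖S‖ = 1 := hmod
  set g : ι → ℝ := fun i => ((starRingEnd ℂ) S * c i).re with hgdef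
  have hnormSc : ∀ i, ‖(starRingEnd ℂ) S * c i‖ = 1 := by
    intro i; rw [norm_mul, RCLike.norm_conj, hSnorm, hc, one_mul]
  have hg1 : ∀ i, g i ≤ 1 := fun i => by
    calc g i ≤ ‖(starRingEnd ℂ) S * c i‖ := Complex.re_le_norm _
      _ = 1 := hnormSc i
  have hgabs : ∀ i, |g i| ≤ 1 := fun i => by
    calc |g i| ≤ ‖(starRingEnd ℂ) S * c i‖ := Complex.abs_re_le_norm _
      _ = 1 := hnormSc i
  have hsumg : Summable (fun i => a i * g i) := by
    refine Summable.of_norm_bounded ha fun i => ?_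
    rw [Real.norm_eq_abs, abs_mul, _root_.abs_of_nonneg (ha0 i)]
    calc a i * |g i| ≤ a i * 1 := by
          exact mul_le_mul_of_nonneg_left (hgabs i) (ha0 i)
      _ = a i := mul_one _
  have htsum : ∑' i, a i * g i = 1 := by
    have h1 : ∀ i, a i * g i = ((starRingEnd ℂ) S * (c i * (a i : ℂ))).re := by
      intro i
      rw [← mul_assoc]
      simp [Complex.mul_re, hgdef]
      ring
    rw [tsum_congr h1, ← Complex.re_tsum (hca.mul_left _), tsum_mul_left, ← hSdef]
    have : (starRingEnd ℂ) S * S = (Complex.normSq S : ℂ) := by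
      rw [mul_comm, Complex.mul_conj]
    rw [this]
    simp [Complex.normSq_eq_norm_sq, hSnorm]
  have hf : ∀ i, a i * (1 - g i) = 0 := by
    intro i
    have hfs : Summable (fun i => a i * (1 - g i)) := by
      refine (ha.sub hsumg).congr fun i => ?_
      ring
    have hnn : ∀ j, 0 ≤ a j * (1 - g j) := fun j =>
      mul_nonneg (ha0 j) (by linarith [hg1 j])
    have htot : ∑' i, a i * (1 - g i) = 0 := by
      have : ∀ i, a i * (1 - g i) = a i - a i * g i := fun i => by ring
      rw [tsum_congr this, Summable.tsum_sub ha hsumg, hsum, htsum, sub_self]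
    have hle := hfs.le_tsum i (fun j _ => hnn j)
    rw [htot] at hle
    linarith [hnn i]
  obtain ⟨i₀, hi₀⟩ : ∃ i, a i ≠ 0 := by
    by_contra h; push_neg at h
    rw [tsum_congr h] at hsum; simp at hsum
  have hSne : (starRingEnd ℂ) S ≠ 0 := by
    intro h
    have := congrArg norm h
    rw [RCLike.norm_conj, hSnorm] at this; simp at this
  have hc1 : ∀ i, a i ≠ 0 → (starRingEnd ℂ) S * c i = 1 := by
    intro i hi
    have hgi : g i = 1 := by
      rcases mul_eq_zero.mp (hf i) with h | h
      · exact absurd h hi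
      · linarith
    have hnorm := hnormSc i
    have hns : Complex.normSq ((starRingEnd ℂ) S * c i) = 1 := by
      rw [Complex.normSq_eq_norm_sq, hnorm]; norm_num
    have him : ((starRingEnd ℂ) S * c i).im = 0 := by
      rw [Complex.normSq_apply] at hns
      have hre : ((starRingEnd ℂ) S * c i).re = 1 := hgi
      nlinarith [sq_nonneg (((starRingEnd ℂ) S * c i).im)]
    exact Complex.ext hgi him
  have huniq : ∀ i, i ≠ i₀ → a i = 0 := by
    intro i hi
    by_contra h
    exact hi (hcinj (mul_left_cancel₀ hSne ((hc1 i h).trans (hc1 i₀ hi₀).symm)))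
  refine ⟨i₀, ?_, huniq⟩
  rw [← hsum, tsum_eq_single i₀ huniq]

/-- if `φ ≥ 0` has `ℤ^d`-periodization `1` a.e., and for every `t` whose character
`k ↦ e^{2πi k·t}` separates points of `ℤ^d` we have `|∑_k e^{2πi k·t} φ(x+k)| = 1` a.e. `x`,
then for a.e. `x` there is a unique `k₀ ∈ ℤ^d` with `φ(x+k₀) ≠ 0`, and moreover `φ(x+k₀) = 1`;
i.e. `φ` is a.e. the indicator of a set translation congruent to `[0,1)^d`. -/
theorem stmt8 (d : ℕ) (φ : (Fin d → ℝ) → ℝ) (hmeas : Measurable φ) (hpos : ∀ x, 0 ≤ φ x)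
    (hsum : ∀ᵐ x ∂(volume : Measure (Fin d → ℝ)),
      (∑' k : Fin d → ℤ, φ (x + fun i => (k i : ℝ))) = 1)
    (hmod : ∀ t : Fin d → ℝ,
      (∀ k k₀ : Fin d → ℤ,
        Complex.exp (2 * Real.pi * Complex.I * (∑ i, (k i : ℝ) * t i)) =
          Complex.exp (2 * Real.pi * Complex.I * (∑ i, (k₀ i : ℝ) * t i)) → k = k₀) →
      ∀ᵐ x ∂(volume : Measure (Fin d → ℝ)),
        ‖∑' k : Fin d → ℤ,
            Complex.exp (2 * Real.pi * Complex.I * (∑ i, (k i : ℝ) * t i)) *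
              (φ (x + fun i => (k i : ℝ)))‖ = 1) :
    ∀ᵐ x ∂(volume : Measure (Fin d → ℝ)),
      ∃ k₀ : Fin d → ℤ, φ (x + fun i => (k₀ i : ℝ)) = 1 ∧
        ∀ k : Fin d → ℤ, k ≠ k₀ → φ (x + fun i => (k i : ℝ)) = 0 := by
  obtain ⟨t, hsep⟩ := exists_sep d
  filter_upwards [hsum, hmod t hsep] with x hsx hmx
  have hcnorm : ∀ k : Fin d → ℤ,
      ‖Complex.exp (2 * Real.pi * Complex.I * (∑ i, (k i : ℝ) * t i))‖ = 1 := by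
    intro k
    rw [Complex.norm_exp]
    simp
  obtain ⟨k₀, h1, h2⟩ := key_tri (fun k : Fin d → ℤ => φ (x + fun i => (k i : ℝ)))
    (fun k : Fin d → ℤ => Complex.exp (2 * Real.pi * Complex.I * (∑ i, (k i : ℝ) * t i)))
    hcnorm (fun k k' h => hsep k k' h) (fun k => hpos _) hsx hmx
  exact ⟨k₀, h1, fun k hk => h2 k hk⟩
end

section
/- Let μ and μ' be translation equivalent Borel probability measures on ℝ^d, and suppose μ has a spectrum Γ ⊆ ℤ^d. Then Γ is also a spectrum for μ'. -/
open MeasureTheory Complex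

/-- Two Borel measures `μ, μ'` on `ℝ^d` are translation equivalent if there is a partition
`(E_i)` of `μ` and integer vectors `(k_i)` such that `(E_i + k_i)` is a partition of `μ'` and
each translation `x ↦ x + k_i` maps `μ|_{E_i}` onto `μ'|_{E_i + k_i}`. -/
def TranslationEquivalent {d : ℕ} (μ μ' : Measure (Fin d → ℝ)) : Prop :=
  ∃ (I : Type) (_ : Countable I) (E : I → Set (Fin d → ℝ)) (k : I → (Fin d → ℤ)),
    (∀ i, MeasurableSet (E i)) ∧
    μ (Set.univ \ ⋃ i, E i) = 0 ∧
    (∀ i j, i ≠ j → μ (E i ∩ E j) = 0) ∧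
    μ' (Set.univ \ ⋃ i, (fun x => x + fun t => ((k i t : ℝ))) '' E i) = 0 ∧
    (∀ i j, i ≠ j →
      μ' (((fun x => x + fun t => ((k i t : ℝ))) '' E i) ∩
          ((fun x => x + fun t => ((k j t : ℝ))) '' E j)) = 0) ∧
    (∀ i, Measure.map (fun x => x + fun t => ((k i t : ℝ))) (μ.restrict (E i)) =
      μ'.restrict ((fun x => x + fun t => ((k i t : ℝ))) '' E i))

lemma expFn_continuous {d : ℕ} (lam : Fin d → ℝ) : Continuous (expFn lam) := by
  unfold expFn; fun_prop

lemma expFn_norm {d : ℕ} (lam x : Fin d → ℝ) : ‖expFn lam x‖ = 1 := by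
  rw [expFn]
  have h : (2 * (Real.pi : ℂ) * Complex.I * ((∑ i, lam i * x i : ℝ) : ℂ))
      = ((2 * Real.pi * (∑ i, lam i * x i) : ℝ) : ℂ) * Complex.I := by
    push_cast; ring
  rw [h, Complex.norm_exp_ofReal_mul_I]

lemma expFn_int_periodic {d : ℕ} (lam m : Fin d → ℤ) (x : Fin d → ℝ) :
    expFn (fun i => (lam i : ℝ)) (x + fun t => (m t : ℝ)) = expFn (fun i => (lam i : ℝ)) x := by
  simp only [expFn, Pi.add_apply]
  have hr : (∑ i, ((lam i : ℝ)) * (x i + (m i : ℝ)))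
      = (∑ i, ((lam i : ℝ)) * x i) + ((∑ i, lam i * m i : ℤ) : ℝ) := by
    push_cast
    rw [← Finset.sum_add_distrib]
    exact Finset.sum_congr rfl fun i _ => by ring
  rw [hr]
  have h3 : (2 * (Real.pi : ℂ) * Complex.I *
        ((((∑ i, (lam i : ℝ) * x i) + ((∑ i, lam i * m i : ℤ) : ℝ)) : ℝ) : ℂ))
      = 2 * (Real.pi : ℂ) * Complex.I * ((∑ i, (lam i : ℝ) * x i : ℝ) : ℂ)
        + ((∑ i, lam i * m i : ℤ) : ℂ) * (2 * Real.pi * Complex.I) := by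
    push_cast; ring
  rw [h3, Complex.exp_add, Complex.exp_int_mul_two_pi_mul_I, mul_one]

/-- if `μ` and `μ'` are translation equivalent Borel probability measures on `ℝ^d`
and `μ` has a spectrum `Γ ⊆ ℤ^d`, then `Γ` is also a spectrum for `μ'`. -/
theorem stmt13 (d : ℕ) (μ μ' : Measure (Fin d → ℝ))
    [IsProbabilityMeasure μ] [IsProbabilityMeasure μ']
    (htrans : TranslationEquivalent μ μ') (Γ : Set (Fin d → ℤ))
    (horth : ∀ lam ∈ Γ, ∀ lam' ∈ Γ,
      ∫ x, expFn (fun i => ((lam : Fin d → ℤ) i : ℝ)) x *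
          (starRingEnd ℂ) (expFn (fun i => ((lam' : Fin d → ℤ) i : ℝ)) x) ∂μ
        = if lam = lam' then 1 else 0)
    (hcomplete : ∀ f : (Fin d → ℝ) → ℂ, MemLp f 2 μ →
      (∀ lam ∈ Γ,
        ∫ x, f x * (starRingEnd ℂ) (expFn (fun i => ((lam : Fin d → ℤ) i : ℝ)) x) ∂μ = 0) →
      f =ᵐ[μ] 0) :
    (∀ lam ∈ Γ, ∀ lam' ∈ Γ,
      ∫ x, expFn (fun i => ((lam : Fin d → ℤ) i : ℝ)) x *
          (starRingEnd ℂ) (expFn (fun i => ((lam' : Fin d → ℤ) i : ℝ)) x) ∂μ'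
        = if lam = lam' then 1 else 0) ∧
    (∀ f : (Fin d → ℝ) → ℂ, MemLp f 2 μ' →
      (∀ lam ∈ Γ,
        ∫ x, f x * (starRingEnd ℂ) (expFn (fun i => ((lam : Fin d → ℤ) i : ℝ)) x) ∂μ' = 0) →
      f =ᵐ[μ'] 0) := by
  classical
  obtain ⟨I, hI, E, k, hEm, hcov, hdisj, hcov', hdisj', hmap⟩ := htrans
  haveI := hI
  haveI : Encodable I := (nonempty_encodable I).some
  -- reindex everything over ℕ
  set E' : ℕ → Set (Fin d → ℝ) := fun n => (Encodable.decode₂ I n).elim ∅ E with hE'def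
  set kk : ℕ → (Fin d → ℤ) := fun n => (Encodable.decode₂ I n).elim 0 k with hkkdef
  set c' : ℕ → (Fin d → ℝ) := fun n => fun t => ((kk n t : ℝ)) with hc'def
  set T : ℕ → (Fin d → ℝ) → (Fin d → ℝ) := fun n x => x + c' n with hTdef
  set G : ℕ → Set (Fin d → ℝ) := fun n => T n '' E' n with hGdef
  have hE'm : ∀ n, MeasurableSet (E' n) := by
    intro n
    rcases h : Encodable.decode₂ I n with _ | i
    · simp [hE'def, h]
    · simpa [hE'def, h] using hEm i
  have hc'some : ∀ n i, Encodable.decode₂ I n = some i →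
      c' n = fun t => ((k i t : ℝ)) := by
    intro n i h
    simp [hc'def, hkkdef, h]
  have hc'none : ∀ n, Encodable.decode₂ I n = none → c' n = 0 := by
    intro n h
    funext t
    simp [hc'def, hkkdef, h]
  have hUE : (⋃ n, E' n) = ⋃ i, E i := by
    ext x
    simp only [Set.mem_iUnion]
    constructor
    · rintro ⟨n, hn⟩
      rcases h : Encodable.decode₂ I n with _ | i
      · rw [hE'def] at hn; simp [h] at hn
      · exact ⟨i, by rw [hE'def] at hn; simpa [h] using hn⟩
    · rintro ⟨i, hi⟩
      exact ⟨Encodable.encode i, by simpa [hE'def, Encodable.decode₂_encode] using hi⟩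
  have hGsome : ∀ n i, Encodable.decode₂ I n = some i →
      G n = (fun x => x + fun t => ((k i t : ℝ))) '' E i := by
    intro n i h
    rw [hGdef]
    have h1 : E' n = E i := by simp [hE'def, h]
    have h2 := hc'some n i h
    show (fun x => x + c' n) '' E' n = _
    rw [h1, h2]
  have hGnone : ∀ n, Encodable.decode₂ I n = none → G n = ∅ := by
    intro n h
    rw [hGdef]
    have h1 : E' n = ∅ := by simp [hE'def, h]
    show (fun x => x + c' n) '' E' n = ∅
    rw [h1, Set.image_empty]
  have hUG : (⋃ n, G n) = ⋃ i, (fun x => x + fun t => ((k i t : ℝ))) '' E i := by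
    ext x
    simp only [Set.mem_iUnion]
    constructor
    · rintro ⟨n, hn⟩
      rcases h : Encodable.decode₂ I n with _ | i
      · rw [hGnone n h] at hn; exact absurd hn (Set.notMem_empty x)
      · exact ⟨i, by rwa [hGsome n i h] at hn⟩
    · rintro ⟨i, hi⟩
      refine ⟨Encodable.encode i, ?_⟩
      rwa [hGsome _ i (Encodable.decode₂_encode i)]
  have hdec_ne : ∀ {m n : ℕ} {i j : I}, m ≠ n → Encodable.decode₂ I m = some i →
      Encodable.decode₂ I n = some j → i ≠ j := by
    intro m n i j hmn hm hn
    rintro rfl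
    exact hmn ((Encodable.decode₂_eq_some.mp hm).symm.trans (Encodable.decode₂_eq_some.mp hn))
  have hE'd : Pairwise (Function.onFun (MeasureTheory.AEDisjoint μ) E') := by
    intro m n hmn
    show μ (E' m ∩ E' n) = 0
    rcases hm : Encodable.decode₂ I m with _ | i
    · have : E' m = ∅ := by simp [hE'def, hm]
      simp [this]
    · rcases hn : Encodable.decode₂ I n with _ | j
      · have : E' n = ∅ := by simp [hE'def, hn]
        simp [this]
      · have h1 : E' m = E i := by simp [hE'def, hm]
        have h2 : E' n = E j := by simp [hE'def, hn]
        rw [h1, h2]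
        exact hdisj i j (hdec_ne hmn hm hn)
  have hGd : Pairwise (Function.onFun (MeasureTheory.AEDisjoint μ') G) := by
    intro m n hmn
    show μ' (G m ∩ G n) = 0
    rcases hm : Encodable.decode₂ I m with _ | i
    · rw [hGnone m hm]; simp
    · rcases hn : Encodable.decode₂ I n with _ | j
      · rw [hGnone n hn]; simp
      · rw [hGsome m i hm, hGsome n j hn]
        exact hdisj' i j (hdec_ne hmn hm hn)
  have hmap' : ∀ n, Measure.map (T n) (μ.restrict (E' n)) = μ'.restrict (G n) := by
    intro n
    rcases h : Encodable.decode₂ I n with _ | i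
    · have h1 : E' n = ∅ := by simp [hE'def, h]
      rw [h1, hGnone n h]
      simp
    · have h1 : E' n = E i := by simp [hE'def, h]
      rw [h1, hGsome n i h]
      show Measure.map (fun x => x + c' n) (μ.restrict (E i)) = _
      rw [hc'some n i h]
      exact hmap i
  have hTm : ∀ n, Measurable (T n) := fun n => measurable_add_const (c' n)
  have hGm : ∀ n, MeasurableSet (G n) := by
    intro n
    have h : G n = (fun y => y - c' n) ⁻¹' (E' n) := by
      ext y
      constructor
      · rintro ⟨x, hx, rfl⟩
        simpa [hTdef] using hx
      · intro hy
        exact ⟨y - c' n, hy, by simp [hTdef]⟩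
    rw [h]
    exact (measurable_sub_const (c' n)) (hE'm n)
  have hres : μ.restrict (⋃ n, E' n) = μ := by
    apply Measure.restrict_eq_self_of_ae_mem
    rw [ae_iff]
    have h : {x | x ∉ ⋃ n, E' n} = Set.univ \ ⋃ i, E i := by
      rw [hUE]; ext x; simp
    rw [h]; exact hcov
  have hres' : μ'.restrict (⋃ n, G n) = μ' := by
    apply Measure.restrict_eq_self_of_ae_mem
    rw [ae_iff]
    have h : {x | x ∉ ⋃ n, G n} = Set.univ \ ⋃ i, (fun x => x + fun t => ((k i t : ℝ))) '' E i := by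
      rw [hUG]; ext x; simp
    rw [h]; exact hcov'
  constructor
  · -- orthonormality transfers
    intro lam hlam lam' hlam'
    set φ : (Fin d → ℝ) → ℂ := fun x =>
      expFn (fun i => ((lam : Fin d → ℤ) i : ℝ)) x *
        (starRingEnd ℂ) (expFn (fun i => ((lam' : Fin d → ℤ) i : ℝ)) x) with hφdef
    have hφc : Continuous φ :=
      (expFn_continuous _).mul (Complex.continuous_conj.comp (expFn_continuous _))
    have hφb : ∀ x, ‖φ x‖ ≤ 1 := by
      intro x
      rw [hφdef]
      simp only [norm_mul, RCLike.norm_conj, expFn_norm, mul_one, le_refl]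
    have hφT : ∀ n x, φ (T n x) = φ x := by
      intro n x
      have hT : T n x = x + fun t => ((kk n t : ℝ)) := by rw [hTdef]
      rw [hφdef]
      simp only
      rw [hT, expFn_int_periodic lam (kk n) x, expFn_int_periodic lam' (kk n) x]
    have hint' : Integrable φ μ' :=
      (integrable_const (1 : ℝ)).mono' hφc.aestronglyMeasurable (ae_of_all _ hφb)
    have hint : Integrable φ μ :=
      (integrable_const (1 : ℝ)).mono' hφc.aestronglyMeasurable (ae_of_all _ hφb)
    calc ∫ x, φ x ∂μ' = ∫ x in ⋃ n, G n, φ x ∂μ' := by rw [hres']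
      _ = ∑' n, ∫ x in G n, φ x ∂μ' :=
          integral_iUnion_ae (fun n => (hGm n).nullMeasurableSet) hGd hint'.integrableOn
      _ = ∑' n, ∫ x in E' n, φ x ∂μ := by
          refine tsum_congr fun n => ?_
          have h1 : ∫ x in G n, φ x ∂μ' = ∫ x, φ x ∂(Measure.map (T n) (μ.restrict (E' n))) := by
            rw [hmap' n]
          rw [h1, integral_map (hTm n).aemeasurable hφc.aestronglyMeasurable]
          simp only [hφT]
      _ = ∫ x in ⋃ n, E' n, φ x ∂μ :=
          (integral_iUnion_ae (fun n => (hE'm n).nullMeasurableSet) hE'd hint.integrableOn).symm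
      _ = ∫ x, φ x ∂μ := by rw [hres]
      _ = if lam = lam' then 1 else 0 := horth lam hlam lam' hlam'
  · -- completeness transfers
    intro f hf hforth
    have hfm : AEStronglyMeasurable f μ' := hf.aestronglyMeasurable
    set f' : (Fin d → ℝ) → ℂ := hfm.mk f with hf'def
    have hf'sm : StronglyMeasurable f' := hfm.stronglyMeasurable_mk
    have hff' : f =ᵐ[μ'] f' := hfm.ae_eq_mk
    have hf'L2 : MemLp f' 2 μ' := MemLp.ae_eq hff' hf
    -- the index of the piece containing x
    set ind : (Fin d → ℝ) → ℕ := fun x => if h : ∃ n, x ∈ E' n then Nat.find h else 0 with hinddef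
    have hind_mem : ∀ x, (∃ n, x ∈ E' n) → x ∈ E' (ind x) := by
      intro x h
      rw [hinddef]
      simp only [dif_pos h]
      exact Nat.find_spec h
    have hindm : Measurable ind := by
      apply measurable_to_countable'
      intro n
      match n with
      | 0 =>
        have h : ind ⁻¹' {0} = E' 0 ∪ (⋃ m, E' m)ᶜ := by
          ext x
          simp only [Set.mem_preimage, Set.mem_singleton_iff, Set.mem_union, Set.mem_compl_iff,
            Set.mem_iUnion, hinddef]
          by_cases h : ∃ m, x ∈ E' m
          · rw [dif_pos h, Nat.find_eq_zero h]
            constructor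
            · intro h0; exact Or.inl h0
            · rintro (h0 | h0)
              · exact h0
              · exact absurd h h0
          · rw [dif_neg h]
            push_neg at h
            simp [h]
        rw [h]
        exact (hE'm 0).union (MeasurableSet.iUnion hE'm).compl
      | (n + 1) =>
        have h : ind ⁻¹' {n + 1} = E' (n + 1) ∩ ⋂ m, ⋂ (_ : m < n + 1), (E' m)ᶜ := by
          ext x
          simp only [Set.mem_preimage, Set.mem_singleton_iff, Set.mem_inter_iff, Set.mem_iInter,
            Set.mem_compl_iff, hinddef]
          by_cases h : ∃ m, x ∈ E' m
          · rw [dif_pos h, Nat.find_eq_iff h]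
          · rw [dif_neg h]
            constructor
            · intro h0; exact absurd h0.symm (Nat.succ_ne_zero n)
            · rintro ⟨h1, -⟩; exact absurd ⟨_, h1⟩ h
        rw [h]
        exact (hE'm _).inter
          (MeasurableSet.iInter fun m => MeasurableSet.iInter fun _ => (hE'm m).compl)
    set S : (Fin d → ℝ) → (Fin d → ℝ) := fun x => x + c' (ind x) with hSdef
    have hccm : Measurable fun x => c' (ind x) := Measurable.comp (measurable_from_nat (f := c')) hindm
    have hSm : Measurable S := measurable_id.add hccm
    set g : (Fin d → ℝ) → ℂ := fun x => f' (S x) with hgdef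
    have hgm : StronglyMeasurable g := (hf'sm.measurable.comp hSm).stronglyMeasurable
    have hgood : ∀ᵐ x ∂μ, ∀ n, x ∈ E' n → ind x = n := by
      have hnull : μ (⋃ (p : ℕ × ℕ), ⋃ (_ : p.1 ≠ p.2), E' p.1 ∩ E' p.2) = 0 :=
        measure_iUnion_null fun p => measure_iUnion_null fun hp => hE'd hp
      rw [ae_iff]
      refine measure_mono_null ?_ hnull
      intro x hx
      simp only [Set.mem_setOf_eq, not_forall] at hx
      obtain ⟨n, hxn, hne⟩ := hx
      have hmem : x ∈ E' (ind x) := hind_mem x ⟨n, hxn⟩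
      exact Set.mem_iUnion.2 ⟨(ind x, n), Set.mem_iUnion.2 ⟨hne, hmem, hxn⟩⟩
    have hST : ∀ᵐ x ∂μ, ∀ n, x ∈ E' n → S x = T n x := by
      filter_upwards [hgood] with x hx n hxn
      rw [hSdef, hTdef]
      simp only [hx n hxn]
    -- transfer of lower integrals
    have lkey : ∀ Φ : (Fin d → ℝ) → ENNReal, Measurable Φ →
        ∫⁻ x, Φ (S x) ∂μ = ∫⁻ y, Φ y ∂μ' := by
      intro Φ hΦ
      calc ∫⁻ x, Φ (S x) ∂μ = ∫⁻ x in ⋃ n, E' n, Φ (S x) ∂μ := by rw [hres]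
        _ = ∑' n, ∫⁻ x in E' n, Φ (S x) ∂μ :=
            lintegral_iUnion₀ (fun n => (hE'm n).nullMeasurableSet) hE'd _
        _ = ∑' n, ∫⁻ x in E' n, Φ (T n x) ∂μ := by
            refine tsum_congr fun n => ?_
            refine lintegral_congr_ae ?_
            filter_upwards [ae_restrict_of_ae hST, ae_restrict_mem (hE'm n)] with x hx hxn
            rw [hx n hxn]
        _ = ∑' n, ∫⁻ y in G n, Φ y ∂μ' := by
            refine tsum_congr fun n => ?_
            rw [← hmap' n, lintegral_map hΦ (hTm n)]
        _ = ∫⁻ y in ⋃ n, G n, Φ y ∂μ' :=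
            (lintegral_iUnion₀ (fun n => (hGm n).nullMeasurableSet) hGd _).symm
        _ = ∫⁻ y, Φ y ∂μ' := by rw [hres']
    have hgL2 : MemLp g 2 μ := by
      refine ⟨hgm.aestronglyMeasurable, ?_⟩
      have h1 : eLpNorm g 2 μ = eLpNorm f' 2 μ' := by
        rw [eLpNorm_eq_lintegral_rpow_enorm_toReal (two_ne_zero) (ENNReal.ofNat_ne_top),
          eLpNorm_eq_lintegral_rpow_enorm_toReal (two_ne_zero) (ENNReal.ofNat_ne_top)]
        congr 1
        exact lkey (fun y => (‖f' y‖₊ : ENNReal) ^ (2 : ENNReal).toReal)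
          ((hf'sm.measurable.nnnorm.coe_nnreal_ennreal).pow_const _)
      rw [h1]
      exact hf'L2.2
    -- transfer of Bochner integrals
    have ikey : ∀ ψ : (Fin d → ℝ) → ℂ, StronglyMeasurable ψ → Integrable ψ μ' →
        ∫ x, ψ (S x) ∂μ = ∫ y, ψ y ∂μ' := by
      intro ψ hψm hψi
      have hcomp : Integrable (fun x => ψ (S x)) μ := by
        refine ⟨((hψm.measurable.comp hSm).stronglyMeasurable).aestronglyMeasurable, ?_⟩
        have h1 : ∫⁻ x, (‖ψ (S x)‖₊ : ENNReal) ∂μ = ∫⁻ y, (‖ψ y‖₊ : ENNReal) ∂μ' :=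
          lkey (fun y => (‖ψ y‖₊ : ENNReal)) hψm.measurable.nnnorm.coe_nnreal_ennreal
        show (∫⁻ x, (‖ψ (S x)‖₊ : ENNReal) ∂μ) < ⊤
        rw [h1]
        exact hψi.2
      calc ∫ x, ψ (S x) ∂μ = ∫ x in ⋃ n, E' n, ψ (S x) ∂μ := by rw [hres]
        _ = ∑' n, ∫ x in E' n, ψ (S x) ∂μ :=
            integral_iUnion_ae (fun n => (hE'm n).nullMeasurableSet) hE'd hcomp.integrableOn
        _ = ∑' n, ∫ x in E' n, ψ (T n x) ∂μ := by
            refine tsum_congr fun n => ?_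
            refine setIntegral_congr_ae (hE'm n) ?_
            filter_upwards [hST] with x hx hxn
            rw [hx n hxn]
        _ = ∑' n, ∫ y in G n, ψ y ∂μ' := by
            refine tsum_congr fun n => ?_
            have h1 : ∫ y in G n, ψ y ∂μ' = ∫ y, ψ y ∂(Measure.map (T n) (μ.restrict (E' n))) := by
              rw [hmap' n]
            rw [h1, integral_map (hTm n).aemeasurable hψm.aestronglyMeasurable]
        _ = ∫ y in ⋃ n, G n, ψ y ∂μ' :=
            (integral_iUnion_ae (fun n => (hGm n).nullMeasurableSet) hGd hψi.integrableOn).symm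
        _ = ∫ y, ψ y ∂μ' := by rw [hres']
    -- the Fourier coefficients of g with respect to μ all vanish
    have hgcoef : ∀ lam ∈ Γ,
        ∫ x, g x * (starRingEnd ℂ) (expFn (fun i => ((lam : Fin d → ℤ) i : ℝ)) x) ∂μ = 0 := by
      intro lam hlam
      set e : (Fin d → ℝ) → ℂ :=
        fun x => (starRingEnd ℂ) (expFn (fun i => ((lam : Fin d → ℤ) i : ℝ)) x) with hedef
      have hec : Continuous e := Complex.continuous_conj.comp (expFn_continuous _)
      have heS : ∀ x, e (S x) = e x := by
        intro x
        have hs : S x = x + fun t => ((kk (ind x) t : ℝ)) := by rw [hSdef]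
        rw [hedef]
        simp only
        rw [hs, expFn_int_periodic lam (kk (ind x)) x]
      have hψm : StronglyMeasurable (fun y => f' y * e y) :=
        hf'sm.mul hec.stronglyMeasurable
      have hψi : Integrable (fun y => f' y * e y) μ' := by
        have hfi : Integrable f' μ' :=
          memLp_one_iff_integrable.mp (hf'L2.mono_exponent one_le_two)
        have h1 : Integrable (fun y => e y * f' y) μ' :=
          hfi.bdd_mul (c := 1) hec.aestronglyMeasurable
            (ae_of_all _ fun x => by
              have hx : ‖e x‖ = 1 := by
                rw [hedef]
                exact (RCLike.norm_conj _).trans (expFn_norm _ _)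
              exact le_of_eq hx)
        have h2 : (fun y => f' y * e y) = fun y => e y * f' y :=
          funext fun y => mul_comm _ _
        rw [h2]
        exact h1
      calc ∫ x, g x * e x ∂μ = ∫ x, f' (S x) * e (S x) ∂μ := by
            refine integral_congr_ae (ae_of_all _ fun x => ?_)
            show g x * e x = f' (S x) * e (S x)
            rw [heS x]
        _ = ∫ y, f' y * e y ∂μ' := ikey (fun y => f' y * e y) hψm hψi
        _ = ∫ y, f y * e y ∂μ' := by
            refine integral_congr_ae ?_
            filter_upwards [hff'] with y hy
            rw [hy]
        _ = 0 := hforth lam hlam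
    have hg0 : g =ᵐ[μ] 0 := hcomplete g hgL2 hgcoef
    -- transfer back to f'
    have hS0 : MeasurableSet {y | f' y ≠ 0} := by
      have : {y | f' y ≠ 0} = f' ⁻¹' ({0}ᶜ) := rfl
      rw [this]
      exact hf'sm.measurable (measurableSet_singleton (0 : ℂ)).compl
    have hpiece : ∀ n, μ' ({y | f' y ≠ 0} ∩ G n) = 0 := by
      intro n
      have h1 : μ' ({y | f' y ≠ 0} ∩ G n) = (μ'.restrict (G n)) {y | f' y ≠ 0} :=
        (Measure.restrict_apply hS0).symm
      rw [h1, ← hmap' n, Measure.map_apply (hTm n) hS0]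
      have h2 : ∀ᵐ x ∂(μ.restrict (E' n)), f' (T n x) = 0 := by
        filter_upwards [ae_restrict_of_ae hg0, ae_restrict_of_ae hST, ae_restrict_mem (hE'm n)]
          with x h1' h2' h3'
        have hg : g x = f' (T n x) := by
          rw [hgdef]
          simp only
          rw [h2' n h3']
        rw [← hg]
        simpa using h1'
      have h4 : (μ.restrict (E' n)) {x | ¬ f' (T n x) = 0} = 0 := ae_iff.mp h2
      have h5 : T n ⁻¹' {y | f' y ≠ 0} = {x | ¬ f' (T n x) = 0} := rfl
      rw [h5, h4]
    have hSnull : μ' {y | f' y ≠ 0} = 0 := by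
      have h1 : μ' {y | f' y ≠ 0} = (μ'.restrict (⋃ n, G n)) {y | f' y ≠ 0} := by rw [hres']
      rw [h1, Measure.restrict_apply hS0, Set.inter_iUnion]
      exact measure_iUnion_null hpiece
    have hf'0 : f' =ᵐ[μ'] 0 := by
      rw [Filter.EventuallyEq, ae_iff]
      simpa using hSnull
    exact hff'.trans hf'0
end

section
/- Let μ and μ' be translation equivalent Borel probability measures on ℝ^d via partition (E_i) and translations (k_i) ∈ ℤ^d. Define ψ(x) = x + k_i for x ∈ E_i. Then the composition operator Ψ : L²(μ') → L²(μ), Ψf = f ∘ ψ, is an isometric isomorphism satisfying Ψ(e_λ) = e_λ for all λ ∈ ℤ^d. -/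
open MeasureTheory Complex

/-- if `μ` and `μ'` are translation equivalent via a partition `(E_i)` and integer
translations `(k_i)`, and `ψ(x) = x + k_i` on `E_i`, then `Ψ f = f ∘ ψ` is an isometric
isomorphism `L²(μ') → L²(μ)` fixing every exponential `e_λ`, `λ ∈ ℤ^d`. -/
theorem stmt14 (d : ℕ) (μ μ' : Measure (Fin d → ℝ))
    [IsProbabilityMeasure μ] [IsProbabilityMeasure μ']
    (I : Type) [Countable I] (E : I → Set (Fin d → ℝ)) (k : I → (Fin d → ℤ))
    (hEmeas : ∀ i, MeasurableSet (E i))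
    (hcover : μ (Set.univ \ ⋃ i, E i) = 0)
    (hdisj : ∀ i j, i ≠ j → μ (E i ∩ E j) = 0)
    (hcover' : μ' (Set.univ \ ⋃ i, (fun x => x + fun t => ((k i t : ℝ))) '' E i) = 0)
    (hdisj' : ∀ i j, i ≠ j →
      μ' (((fun x => x + fun t => ((k i t : ℝ))) '' E i) ∩
          ((fun x => x + fun t => ((k j t : ℝ))) '' E j)) = 0)
    (hpush : ∀ i, Measure.map (fun x => x + fun t => ((k i t : ℝ))) (μ.restrict (E i)) =
      μ'.restrict ((fun x => x + fun t => ((k i t : ℝ))) '' E i))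
    (ψ : (Fin d → ℝ) → (Fin d → ℝ)) (hψmeas : Measurable ψ)
    (hψ : ∀ i, ∀ x ∈ E i, ψ x = x + fun t => ((k i t : ℝ))) :
    Measure.map ψ μ = μ' ∧
    (∀ f : (Fin d → ℝ) → ℂ, eLpNorm (f ∘ ψ) 2 μ = eLpNorm f 2 μ') ∧
    (∀ g : (Fin d → ℝ) → ℂ, MemLp g 2 μ →
      ∃ f : (Fin d → ℝ) → ℂ, MemLp f 2 μ' ∧ g =ᵐ[μ] f ∘ ψ) ∧
    (∀ lam : Fin d → ℤ, ∀ᵐ x ∂μ,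
      expFn (fun i => (lam i : ℝ)) (ψ x) = expFn (fun i => (lam i : ℝ)) x) := by
  classical
  set c : I → (Fin d → ℝ) := fun i t => ((k i t : ℝ)) with hc
  set G : I → Set (Fin d → ℝ) := fun i => (fun x => x + c i) '' E i with hGdef
  have hemb : ∀ i, MeasurableEmbedding (fun x : Fin d → ℝ => x + c i) :=
    fun i => measurableEmbedding_addRight (c i)
  have hGmeas : ∀ i, MeasurableSet (G i) :=
    fun i => ((hemb i).measurableSet_image).2 (hEmeas i)
  -- a.e. coverage
  have hcov : ∀ᵐ x ∂μ, x ∈ ⋃ i, E i := by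
    rw [ae_iff]
    rw [show {x | ¬ x ∈ ⋃ i, E i} = Set.univ \ ⋃ i, E i by ext x; simp]
    exact hcover
  have hcov' : ∀ᵐ x ∂μ', x ∈ ⋃ i, G i := by
    rw [ae_iff]
    rw [show {x | ¬ x ∈ ⋃ i, G i} = Set.univ \ ⋃ i, G i by ext x; simp]
    exact hcover'
  have hμres : μ.restrict (⋃ i, E i) = μ := Measure.restrict_eq_self_of_ae_mem hcov
  have hμ'res : μ'.restrict (⋃ i, G i) = μ' := Measure.restrict_eq_self_of_ae_mem hcov'
  have hsum : μ.restrict (⋃ i, E i) = Measure.sum fun i => μ.restrict (E i) :=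
    Measure.restrict_iUnion_ae (fun i j hij => hdisj i j hij)
      (fun i => (hEmeas i).nullMeasurableSet)
  have hsum' : μ'.restrict (⋃ i, G i) = Measure.sum fun i => μ'.restrict (G i) :=
    Measure.restrict_iUnion_ae (fun i j hij => hdisj' i j hij)
      (fun i => (hGmeas i).nullMeasurableSet)
  -- key change-of-variables for arbitrary ℝ≥0∞-valued functions
  have key : ∀ h : (Fin d → ℝ) → ENNReal, ∫⁻ x, h (ψ x) ∂μ = ∫⁻ x, h x ∂μ' := by
    intro h
    calc ∫⁻ x, h (ψ x) ∂μ
        = ∫⁻ x, h (ψ x) ∂(Measure.sum fun i => μ.restrict (E i)) := by rw [← hsum, hμres]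
      _ = ∑' i, ∫⁻ x, h (ψ x) ∂(μ.restrict (E i)) := lintegral_sum_measure _ _
      _ = ∑' i, ∫⁻ x, h (x + c i) ∂(μ.restrict (E i)) := by
          refine tsum_congr fun i => lintegral_congr_ae ?_
          filter_upwards [ae_restrict_mem (hEmeas i)] with x hx
          rw [hψ i x hx]
      _ = ∑' i, ∫⁻ y, h y ∂(μ'.restrict (G i)) := by
          refine tsum_congr fun i => ?_
          rw [← hpush i, (hemb i).lintegral_map]
      _ = ∫⁻ y, h y ∂(Measure.sum fun i => μ'.restrict (G i)) :=
          (lintegral_sum_measure _ _).symm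
      _ = ∫⁻ y, h y ∂μ' := by rw [← hsum', hμ'res]
  -- first bullet
  have hmap : Measure.map ψ μ = μ' := by
    ext s hs
    rw [Measure.map_apply hψmeas hs]
    have h1 := key (s.indicator 1)
    rw [lintegral_indicator_one hs] at h1
    rw [← h1]
    have h2 : ∀ x, s.indicator (1 : (Fin d → ℝ) → ENNReal) (ψ x)
        = (ψ ⁻¹' s).indicator 1 x := by
      intro x; simp [Set.indicator_apply, Set.mem_preimage]
    rw [lintegral_congr h2, lintegral_indicator_one (hψmeas hs)]
  -- second bullet
  have hnorm : ∀ f : (Fin d → ℝ) → ℂ, eLpNorm (f ∘ ψ) 2 μ = eLpNorm f 2 μ' := by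
    intro f
    rw [eLpNorm_eq_lintegral_rpow_enorm_toReal (by norm_num) (by norm_num),
        eLpNorm_eq_lintegral_rpow_enorm_toReal (by norm_num) (by norm_num)]
    congr 1
    exact key fun y => ‖f y‖ₑ ^ (2 : ENNReal).toReal
  -- construct a measurable a.e. inverse φ
  have hne : Nonempty I := by
    by_contra hn
    have : IsEmpty I := not_nonempty_iff.mp hn
    rw [Set.iUnion_of_empty, Set.diff_empty] at hcover
    simp [measure_univ] at hcover
  obtain ⟨e, he⟩ := exists_surjective_nat I
  set H' : ℕ → Set (Fin d → ℝ) := disjointed (fun n => G (e n)) with hH'def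
  have hH'meas : ∀ n, MeasurableSet (H' n) :=
    MeasurableSet.disjointed (fun n => hGmeas (e n))
  have hH'disj : Pairwise (Function.onFun Disjoint H') := disjoint_disjointed _
  have hH'sub : ∀ n, H' n ⊆ G (e n) := disjointed_subset _
  set φ : (Fin d → ℝ) → (Fin d → ℝ) :=
    fun x => if hx : ∃ n, x ∈ H' n then x - c (e (Nat.find hx)) else x with hφdef
  have hφ_eq : ∀ n x, x ∈ H' n → φ x = x - c (e n) := by
    intro n x hxn
    have hx : ∃ m, x ∈ H' m := ⟨n, hxn⟩
    have hfind : Nat.find hx = n := by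
      by_contra hne'
      exact Set.notMem_empty x ((hH'disj hne').le_bot ⟨Nat.find_spec hx, hxn⟩)
    show (if hx : ∃ n, x ∈ H' n then x - c (e (Nat.find hx)) else x) = x - c (e n)
    rw [dif_pos hx, hfind]
  have hφmeas : Measurable φ := by
    intro s hs
    have hrepr : φ ⁻¹' s =
        (⋃ n, H' n ∩ (fun x => x - c (e n)) ⁻¹' s) ∪ ((⋃ n, H' n)ᶜ ∩ s) := by
      ext x
      constructor
      · intro hxs
        by_cases hx : ∃ n, x ∈ H' n
        · obtain ⟨n, hn⟩ := hx
          left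
          refine Set.mem_iUnion.2 ⟨n, hn, ?_⟩
          show x - c (e n) ∈ s
          rw [← hφ_eq n x hn]; exact hxs
        · right
          refine ⟨by simpa using hx, ?_⟩
          have hfx : φ x = x := by
            show (if hx : ∃ n, x ∈ H' n then x - c (e (Nat.find hx)) else x) = x
            exact dif_neg hx
          rwa [Set.mem_preimage, hfx] at hxs
      · rintro (hx | ⟨hx1, hx2⟩)
        · obtain ⟨n, hn, hns⟩ := Set.mem_iUnion.1 hx
          show φ x ∈ s
          rw [hφ_eq n x hn]; exact hns
        · show φ x ∈ s
          have hx : ¬ ∃ n, x ∈ H' n := by simpa using hx1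
          simpa only [hφdef, dif_neg hx] using hx2
    rw [hrepr]
    exact ((MeasurableSet.iUnion fun n =>
      (hH'meas n).inter ((measurable_id.sub measurable_const) hs)).union
      (((MeasurableSet.iUnion hH'meas).compl).inter hs))
  -- a.e. left inverse
  have hnull : ∀ i j, i ≠ j →
      μ (E i ∩ (fun x => x + c i) ⁻¹' (G i ∩ G j)) = 0 := by
    intro i j hij
    have hm : MeasurableSet (G i ∩ G j) := (hGmeas i).inter (hGmeas j)
    have : μ (E i ∩ (fun x => x + c i) ⁻¹' (G i ∩ G j))
        = (μ.restrict (E i)) ((fun x => x + c i) ⁻¹' (G i ∩ G j)) := by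
      rw [Measure.restrict_apply ((hemb i).measurable hm), Set.inter_comm]
    rw [this, ← Measure.map_apply (hemb i).measurable hm, hpush i,
      Measure.restrict_apply hm]
    have : G i ∩ G j ∩ G i = G i ∩ G j := by
      rw [Set.inter_comm (G i) (G j), Set.inter_assoc, Set.inter_self, Set.inter_comm]
    rw [this]
    exact hdisj' i j hij
  have hbad : ∀ᵐ x ∂μ, ∀ i j, i ≠ j → x ∉ E i ∩ (fun x => x + c i) ⁻¹' (G i ∩ G j) := by
    rw [ae_all_iff]
    intro i
    rw [ae_all_iff]
    intro j
    by_cases hij : i = j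
    · filter_upwards with x h; exact absurd hij h
    · filter_upwards [measure_eq_zero_iff_ae_notMem.mp (hnull i j hij)] with x hx _
      exact hx
  have hinv : ∀ᵐ x ∂μ, φ (ψ x) = x := by
    filter_upwards [hcov, hbad] with x hxU hxN
    obtain ⟨i, hxEi⟩ := Set.mem_iUnion.1 hxU
    have hψx : ψ x = x + c i := hψ i x hxEi
    have hxG : ψ x ∈ G i := ⟨x, hxEi, hψx.symm⟩
    obtain ⟨n, rfl⟩ := he i
    have hmem : ψ x ∈ ⋃ m, H' m := by
      rw [hH'def, iUnion_disjointed]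
      exact Set.mem_iUnion.2 ⟨n, hxG⟩
    obtain ⟨m, hm⟩ := Set.mem_iUnion.1 hmem
    have hφx : φ (ψ x) = ψ x - c (e m) := hφ_eq m (ψ x) hm
    by_cases hem : e m = e n
    · rw [hφx, hψx, hem]; abel
    · exact absurd ⟨hxEi, by rw [Set.mem_preimage, ← hψx]; exact ⟨hxG, hH'sub m hm⟩⟩
        (hxN (e n) (e m) (fun h => hem h.symm))
  refine ⟨hmap, hnorm, ?_, ?_⟩
  · -- third bullet
    intro g hg
    have hgm := hg.1
    set g₀ := hgm.mk g with hg₀def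
    have hg₀ : StronglyMeasurable g₀ := hgm.stronglyMeasurable_mk
    have hcomp : (g₀ ∘ φ) ∘ ψ =ᵐ[μ] g := by
      filter_upwards [hinv, hgm.ae_eq_mk] with x h1 h2
      simp only [Function.comp_apply, h1]
      rw [hg₀def]
      exact h2.symm
    refine ⟨g₀ ∘ φ, ⟨(hg₀.comp_measurable hφmeas).aestronglyMeasurable, ?_⟩, hcomp.symm⟩
    rw [← hnorm (g₀ ∘ φ), eLpNorm_congr_ae hcomp]
    exact hg.2
  · -- fourth bullet
    intro lam
    filter_upwards [hcov] with x hxU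
    obtain ⟨i, hxEi⟩ := Set.mem_iUnion.1 hxU
    rw [hψ i x hxEi]
    simp only [expFn, Pi.add_apply]
    push_cast
    have hsum : (∑ t, ((lam t : ℤ) : ℂ) * (((x t : ℝ) : ℂ) + ((k i t : ℤ) : ℂ)))
        = (∑ t, ((lam t : ℤ) : ℂ) * ((x t : ℝ) : ℂ)) + ((∑ t, lam t * k i t : ℤ) : ℂ) := by
      push_cast
      rw [← Finset.sum_add_distrib]
      exact Finset.sum_congr rfl fun t _ => by ring
    rw [hsum, mul_add, Complex.exp_add]
    have : (2 * (Real.pi : ℂ) * Complex.I) * ((∑ t, lam t * k i t : ℤ) : ℂ)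
        = ((∑ t, lam t * k i t : ℤ) : ℂ) * (2 * Real.pi * Complex.I) := by ring
    rw [this, Complex.exp_int_mul_two_pi_mul_I, mul_one]
end
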